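/- arXiv:0801.2444 — 3 statements merged into one kernel-verified Lean document; each statement's English description precedes it below -/
import Mathlib

section
/- Let R(G₂) = ℤ[ω₁,ω₂,y₃]/⟨g₂, r₃, r₆⟩, where g₂ = 3ω₁² − 3ω₁ω₂ + ω₂², r₃ = 2y₃ − ω₁³, and r₆ = y₃². Then R(G₂) is a free ℤ-module of rank 12 (the order of the Weyl group of G₂). -/
set_option maxHeartbeats 2000000
set_option synthInstance.maxHeartbeats 1000000

open MvPolynomial

/-- The polynomial ring ℤ[ω₁,ω₂,y₃]: ω₁ = X 0, ω₂ = X 1, y₃ = X 2. -/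
noncomputable abbrev G2Poly : Type := MvPolynomial (Fin 3) ℤ

/-- The Schubert presentation R(G₂) = ℤ[ω₁,ω₂,y₃]/⟨g₂, r₃, r₆⟩. -/
noncomputable abbrev RG2 : Type :=
  G2Poly ⧸ Ideal.span
    ({ 3 * X 0 ^ 2 - 3 * X 0 * X 1 + X 1 ^ 2,   -- g₂
       2 * X 2 - X 0 ^ 3,                        -- r₃
       X 2 ^ 2 } :                               -- r₆
      Set G2Poly)

namespace RG2Aux

/-! ### The target ring K = (ℚ[x]/(x⁶))[β]/(β² - 3xβ + 3x²), free of rank 12 over ℚ. -/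

noncomputable abbrev L : Type := AdjoinRoot ((Polynomial.X : Polynomial ℚ) ^ 6)

noncomputable def xx : L := AdjoinRoot.root _

noncomputable def qq : Polynomial L :=
  Polynomial.X ^ 2 - Polynomial.C (3 * xx) * Polynomial.X + Polynomial.C (3 * xx ^ 2)

noncomputable abbrev K : Type := AdjoinRoot qq

instance : Nontrivial L :=
  AdjoinRoot.nontrivial _ (by rw [Polynomial.degree_X_pow]; norm_num)

lemma qq_monic : qq.Monic := by unfold qq; monicity!

lemma qq_deg : qq.degree = 2 := by unfold qq; compute_degree!

lemma xx6 : xx ^ 6 = 0 := by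
  have h : AdjoinRoot.mk ((Polynomial.X : Polynomial ℚ) ^ 6)
      ((Polynomial.X : Polynomial ℚ) ^ 6) = 0 := AdjoinRoot.mk_self
  simpa [xx, map_pow] using h

noncomputable def A : K := AdjoinRoot.of qq xx
noncomputable def B : K := AdjoinRoot.root qq
noncomputable def hf : K := AdjoinRoot.of qq (algebraMap ℚ L (1/2))
noncomputable def CC : K := hf * A ^ 3

lemma hB : B ^ 2 = 3 * A * B - 3 * A ^ 2 := by
  have h : AdjoinRoot.mk qq (Polynomial.X ^ 2 - Polynomial.C (3 * xx) * Polynomial.X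
      + Polynomial.C (3 * xx ^ 2)) = 0 := by
    rw [← qq]; exact AdjoinRoot.mk_self
  simp only [map_add, map_sub, map_mul, map_pow, AdjoinRoot.mk_X, AdjoinRoot.mk_C,
    map_ofNat] at h
  unfold A B
  linear_combination h

lemma h2K : 2 * hf = 1 := by
  have h : (2 : K) = AdjoinRoot.of qq (algebraMap ℚ L 2) := by simp [map_ofNat]
  rw [h, hf, ← map_mul, ← map_mul]
  norm_num

lemma A6 : A ^ 6 = 0 := by
  rw [A, ← map_pow, xx6, map_zero]

/-! ### The map Φ : ℤ[ω₁,ω₂,y₃] → K -/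

noncomputable def Φ : G2Poly →+* K :=
  MvPolynomial.eval₂Hom (Int.castRingHom K) ![A, B, CC]

lemma Φ_X0 : Φ (X 0) = A := by simp [Φ]
lemma Φ_X1 : Φ (X 1) = B := by simp [Φ]
lemma Φ_X2 : Φ (X 2) = CC := by simp [Φ]

noncomputable def Ig : Ideal G2Poly := Ideal.span
    ({ 3 * X 0 ^ 2 - 3 * X 0 * X 1 + X 1 ^ 2,
       2 * X 2 - X 0 ^ 3,
       X 2 ^ 2 } :
      Set G2Poly)

lemma Ig_le_ker : Ig ≤ RingHom.ker Φ := by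
  rw [Ig, Ideal.span_le]
  rintro p hp
  simp only [Set.mem_insert_iff, Set.mem_singleton_iff] at hp
  rcases hp with rfl | rfl | rfl <;>
    simp only [SetLike.mem_coe, RingHom.mem_ker, map_add, map_sub, map_mul, map_pow,
      map_ofNat, Φ_X0, Φ_X1, Φ_X2]
  · linear_combination hB
  · rw [show CC = hf * A ^ 3 from rfl]
    linear_combination A ^ 3 * h2K
  · rw [show CC = hf * A ^ 3 from rfl, show (hf * A ^ 3) ^ 2 = hf ^ 2 * A ^ 6 by ring,
      A6, mul_zero]

noncomputable def ℓ : RG2 →+* K :=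
  Ideal.Quotient.lift Ig Φ (fun _ ha => Ig_le_ker ha)

/-! ### Generators and relations in RG2 -/

noncomputable def aa : RG2 := Ideal.Quotient.mk Ig (X 0)
noncomputable def bb : RG2 := Ideal.Quotient.mk Ig (X 1)
noncomputable def cc : RG2 := Ideal.Quotient.mk Ig (X 2)

lemma ℓ_mk (p : G2Poly) : ℓ (Ideal.Quotient.mk Ig p) = Φ p := rfl

lemma ℓ_aa : ℓ aa = A := Φ_X0
lemma ℓ_bb : ℓ bb = B := Φ_X1
lemma ℓ_cc : ℓ cc = CC := Φ_X2

lemma rel_b : bb ^ 2 = 3 * aa * bb - 3 * aa ^ 2 := by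
  have h : Ideal.Quotient.mk Ig (3 * X 0 ^ 2 - 3 * X 0 * X 1 + X 1 ^ 2) = 0 := by
    rw [Ideal.Quotient.eq_zero_iff_mem]
    exact Ideal.subset_span (by simp [Ig])
  have h' : Ideal.Quotient.mk Ig (X 1 ^ 2) = Ideal.Quotient.mk Ig (3 * X 0 * X 1 - 3 * X 0 ^ 2) := by
    rw [Ideal.Quotient.eq]
    exact (show (X 1 ^ 2 - (3 * X 0 * X 1 - 3 * X 0 ^ 2) : G2Poly) = 3 * X 0 ^ 2 - 3 * X 0 * X 1 + X 1 ^ 2 by ring) ▸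
      Ideal.subset_span (by simp)
  exact h'

lemma rel_a : aa ^ 3 = 2 * cc := by
  have h : Ideal.Quotient.mk Ig (2 * X 2 - X 0 ^ 3) = 0 := by
    rw [Ideal.Quotient.eq_zero_iff_mem]
    exact Ideal.subset_span (by simp [Ig])
  have h' : Ideal.Quotient.mk Ig (X 0 ^ 3) = Ideal.Quotient.mk Ig (2 * X 2) := by
    rw [Ideal.Quotient.eq]
    exact (show (X 0 ^ 3 - 2 * X 2 : G2Poly) = -(2 * X 2 - X 0 ^ 3) by ring) ▸
      Ig.neg_mem (Ideal.subset_span (by simp))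
  exact h'

lemma rel_c : cc ^ 2 = 0 := by
  have h : Ideal.Quotient.mk Ig (X 2 ^ 2) = 0 := by
    rw [Ideal.Quotient.eq_zero_iff_mem]
    exact Ideal.subset_span (by simp [Ig])
  rw [map_pow] at h
  unfold cc
  exact h

/-! ### The 12 candidate basis elements and their span -/

noncomputable def bas : Fin 12 → RG2 :=
  ![1, aa, bb, aa^2, aa*bb, aa^2*bb, cc, aa*cc, bb*cc, aa^2*cc, aa*bb*cc, aa^2*bb*cc]

noncomputable def S : Submodule ℤ RG2 := Submodule.span ℤ (Set.range bas)

lemma mem_bas (n : Fin 12) : bas n ∈ S := Submodule.subset_span ⟨n, rfl⟩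

lemma m0 : (1 : RG2) ∈ S := mem_bas 0
lemma m1 : aa ∈ S := mem_bas 1
lemma m2 : bb ∈ S := mem_bas 2
lemma m3 : aa^2 ∈ S := mem_bas 3
lemma m4 : aa*bb ∈ S := mem_bas 4
lemma m5 : aa^2*bb ∈ S := mem_bas 5
lemma m6 : cc ∈ S := mem_bas 6
lemma m7 : aa*cc ∈ S := mem_bas 7
lemma m8 : bb*cc ∈ S := mem_bas 8
lemma m9 : aa^2*cc ∈ S := mem_bas 9
lemma m10 : aa*bb*cc ∈ S := mem_bas 10
lemma m11 : aa^2*bb*cc ∈ S := mem_bas 11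

lemma comb1 {x y : RG2} (n : ℤ) (hy : y ∈ S) (hx : x = (n : RG2) * y) : x ∈ S := by
  rw [hx, ← zsmul_eq_mul]
  exact S.smul_mem n hy

lemma comb2 {x y z : RG2} (m n : ℤ) (hy : y ∈ S) (hz : z ∈ S)
    (hx : x = (m : RG2) * y + (n : RG2) * z) : x ∈ S := by
  rw [hx, ← zsmul_eq_mul, ← zsmul_eq_mul]
  exact S.add_mem (S.smul_mem m hy) (S.smul_mem n hz)

lemma mulA_bas (n : Fin 12) : aa * bas n ∈ S := by
  fin_cases n
  · show aa * (1:RG2) ∈ S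
    exact comb1 1 m1 (by push_cast; ring)
  · show aa * aa ∈ S
    exact comb1 1 m3 (by push_cast; ring)
  · show aa * bb ∈ S
    exact comb1 1 m4 (by push_cast; ring)
  · show aa * (aa^2) ∈ S
    refine comb1 2 m6 ?_
    push_cast
    linear_combination rel_a
  · show aa * (aa*bb) ∈ S
    exact comb1 1 m5 (by push_cast; ring)
  · show aa * (aa^2*bb) ∈ S
    refine comb1 2 m8 ?_
    push_cast
    linear_combination bb * rel_a
  · show aa * cc ∈ S
    exact comb1 1 m7 (by push_cast; ring)
  · show aa * (aa*cc) ∈ S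
    exact comb1 1 m9 (by push_cast; ring)
  · show aa * (bb*cc) ∈ S
    exact comb1 1 m10 (by push_cast; ring)
  · show aa * (aa^2*cc) ∈ S
    refine comb1 0 m0 ?_
    push_cast
    linear_combination cc * rel_a + 2 * rel_c
  · show aa * (aa*bb*cc) ∈ S
    exact comb1 1 m11 (by push_cast; ring)
  · show aa * (aa^2*bb*cc) ∈ S
    refine comb1 0 m0 ?_
    push_cast
    linear_combination bb * cc * rel_a + 2 * bb * rel_c

lemma mulB_bas (n : Fin 12) : bb * bas n ∈ S := by
  fin_cases n
  · show bb * (1:RG2) ∈ S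
    exact comb1 1 m2 (by push_cast; ring)
  · show bb * aa ∈ S
    exact comb1 1 m4 (by push_cast; ring)
  · show bb * bb ∈ S
    refine comb2 3 (-3) m4 m3 ?_
    push_cast
    linear_combination rel_b
  · show bb * (aa^2) ∈ S
    exact comb1 1 m5 (by push_cast; ring)
  · show bb * (aa*bb) ∈ S
    refine comb2 3 (-6) m5 m6 ?_
    push_cast
    linear_combination aa * rel_b - 3 * rel_a
  · show bb * (aa^2*bb) ∈ S
    refine comb2 6 (-6) m8 m7 ?_
    push_cast
    linear_combination aa^2 * rel_b + (3*bb - 3*aa) * rel_a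
  · show bb * cc ∈ S
    exact comb1 1 m8 (by push_cast; ring)
  · show bb * (aa*cc) ∈ S
    exact comb1 1 m10 (by push_cast; ring)
  · show bb * (bb*cc) ∈ S
    refine comb2 3 (-3) m10 m9 ?_
    push_cast
    linear_combination cc * rel_b
  · show bb * (aa^2*cc) ∈ S
    exact comb1 1 m11 (by push_cast; ring)
  · show bb * (aa*bb*cc) ∈ S
    refine comb1 3 m11 ?_
    push_cast
    linear_combination aa*cc*rel_b - 3*cc*rel_a - 6*rel_c
  · show bb * (aa^2*bb*cc) ∈ S
    refine comb1 0 m0 ?_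
    push_cast
    linear_combination aa^2*cc*rel_b + (3*bb - 3*aa)*cc*rel_a + (6*bb - 6*aa)*rel_c

lemma mulC_bas (n : Fin 12) : cc * bas n ∈ S := by
  fin_cases n
  · show cc * (1:RG2) ∈ S
    exact comb1 1 m6 (by push_cast; ring)
  · show cc * aa ∈ S
    exact comb1 1 m7 (by push_cast; ring)
  · show cc * bb ∈ S
    exact comb1 1 m8 (by push_cast; ring)
  · show cc * (aa^2) ∈ S
    exact comb1 1 m9 (by push_cast; ring)
  · show cc * (aa*bb) ∈ S
    exact comb1 1 m10 (by push_cast; ring)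
  · show cc * (aa^2*bb) ∈ S
    exact comb1 1 m11 (by push_cast; ring)
  · show cc * cc ∈ S
    refine comb1 0 m0 ?_
    push_cast
    linear_combination rel_c
  · show cc * (aa*cc) ∈ S
    refine comb1 0 m0 ?_
    push_cast
    linear_combination aa * rel_c
  · show cc * (bb*cc) ∈ S
    refine comb1 0 m0 ?_
    push_cast
    linear_combination bb * rel_c
  · show cc * (aa^2*cc) ∈ S
    refine comb1 0 m0 ?_
    push_cast
    linear_combination aa^2 * rel_c
  · show cc * (aa*bb*cc) ∈ S
    refine comb1 0 m0 ?_
    push_cast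
    linear_combination aa*bb * rel_c
  · show cc * (aa^2*bb*cc) ∈ S
    refine comb1 0 m0 ?_
    push_cast
    linear_combination aa^2*bb * rel_c


lemma mulA' {x : RG2} (hx : x ∈ S) : aa * x ∈ S := by
  induction hx using Submodule.span_induction with
  | mem y hy => obtain ⟨n, rfl⟩ := hy; exact mulA_bas n
  | zero => rw [mul_zero]; exact S.zero_mem
  | add y z _ _ hy hz => rw [mul_add]; exact S.add_mem hy hz
  | smul t y _ hy => rw [mul_smul_comm]; exact S.smul_mem t hy

lemma mulB' {x : RG2} (hx : x ∈ S) : bb * x ∈ S := by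
  induction hx using Submodule.span_induction with
  | mem y hy => obtain ⟨n, rfl⟩ := hy; exact mulB_bas n
  | zero => rw [mul_zero]; exact S.zero_mem
  | add y z _ _ hy hz => rw [mul_add]; exact S.add_mem hy hz
  | smul t y _ hy => rw [mul_smul_comm]; exact S.smul_mem t hy

lemma mulC' {x : RG2} (hx : x ∈ S) : cc * x ∈ S := by
  induction hx using Submodule.span_induction with
  | mem y hy => obtain ⟨n, rfl⟩ := hy; exact mulC_bas n
  | zero => rw [mul_zero]; exact S.zero_mem
  | add y z _ _ hy hz => rw [mul_add]; exact S.add_mem hy hz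
  | smul t y _ hy => rw [mul_smul_comm]; exact S.smul_mem t hy

lemma span_top : S = ⊤ := by
  rw [eq_top_iff]
  rintro z -
  obtain ⟨p, rfl⟩ := Ideal.Quotient.mk_surjective (I := Ig) z
  induction p using MvPolynomial.induction_on with
  | C n =>
    have h : Ideal.Quotient.mk Ig (C n) = (n : ℤ) • (1 : RG2) := by
      rw [zsmul_eq_mul, mul_one]
      simp
      rfl
    rw [h]
    exact S.smul_mem n m0
  | add p q hp hq => rw [map_add]; exact S.add_mem hp hq
  | mul_X p i hp =>
    rw [map_mul]
    have swap : ∀ x y : RG2, x * y ∈ S → y * x ∈ S := by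
      intro x y h; simpa [mul_comm] using h
    fin_cases i
    · exact swap _ _ (mulA' hp)
    · exact swap _ _ (mulB' hp)
    · exact swap _ _ (mulC' hp)

/-! ### The linear map φ : ℤ¹² → RG2 -/

noncomputable def φ : (Fin 12 → ℤ) →ₗ[ℤ] RG2 where
  toFun v := ∑ n : Fin 12, v n • bas n
  map_add' v w := by
    simp only [Pi.add_apply, add_smul]
    rw [Finset.sum_add_distrib]
  map_smul' t v := by
    simp only [Pi.smul_apply, smul_eq_mul, RingHom.id_apply, mul_smul]
    rw [Finset.smul_sum]

lemma φ_single (n : Fin 12) : φ (Pi.single n 1) = bas n := by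
  simp only [φ, LinearMap.coe_mk, AddHom.coe_mk]
  rw [Finset.sum_eq_single n]
  · simp
  · intro m _ hm; simp [Pi.single_eq_of_ne hm]
  · intro hn; exact absurd (Finset.mem_univ n) hn

lemma φ_surj : Function.Surjective φ := by
  intro z
  have hz : z ∈ S := by rw [span_top]; trivial
  have hle : S ≤ LinearMap.range φ := by
    rw [S, Submodule.span_le]
    rintro _ ⟨n, rfl⟩
    exact ⟨Pi.single n 1, φ_single n⟩
  exact hle hz

/-! ### Injectivity of φ -/

lemma φ_inj : Function.Injective φ := by
  rw [injective_iff_map_eq_zero]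
  intro v hv
  -- push the equation to K via ℓ
  have hK0 : ((v 0 : ℤ) : K) * 1 + ((v 1 : ℤ) : K) * A + ((v 2 : ℤ) : K) * B
      + ((v 3 : ℤ) : K) * A^2 + ((v 4 : ℤ) : K) * (A*B) + ((v 5 : ℤ) : K) * (A^2*B)
      + ((v 6 : ℤ) : K) * CC + ((v 7 : ℤ) : K) * (A*CC) + ((v 8 : ℤ) : K) * (B*CC)
      + ((v 9 : ℤ) : K) * (A^2*CC) + ((v 10 : ℤ) : K) * (A*B*CC)
      + ((v 11 : ℤ) : K) * (A^2*B*CC) = 0 := by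
    have h := congrArg ℓ hv
    rw [map_zero] at h
    rw [show φ v = ∑ n : Fin 12, v n • bas n from rfl] at h
    rw [Fin.sum_univ_succ, Fin.sum_univ_succ, Fin.sum_univ_succ, Fin.sum_univ_succ,
      Fin.sum_univ_succ, Fin.sum_univ_succ, Fin.sum_univ_succ, Fin.sum_univ_succ,
      Fin.sum_univ_succ, Fin.sum_univ_succ, Fin.sum_univ_succ, Fin.sum_univ_succ,
      Fin.sum_univ_zero] at h
    simp only [bas, Matrix.cons_val_zero, Matrix.cons_val_one, Matrix.head_cons,
      Matrix.cons_val_succ, add_zero] at h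
    simp only [
      show (0 : Fin 11).succ = (1 : Fin 12) from rfl,
      show (0 : Fin 10).succ.succ = (2 : Fin 12) from rfl,
      show (0 : Fin 9).succ.succ.succ = (3 : Fin 12) from rfl,
      show (0 : Fin 8).succ.succ.succ.succ = (4 : Fin 12) from rfl,
      show (0 : Fin 7).succ.succ.succ.succ.succ = (5 : Fin 12) from rfl,
      show (0 : Fin 6).succ.succ.succ.succ.succ.succ = (6 : Fin 12) from rfl,
      show (0 : Fin 5).succ.succ.succ.succ.succ.succ.succ = (7 : Fin 12) from rfl,
      show (0 : Fin 4).succ.succ.succ.succ.succ.succ.succ.succ = (8 : Fin 12) from rfl,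
      show (0 : Fin 3).succ.succ.succ.succ.succ.succ.succ.succ.succ = (9 : Fin 12) from rfl,
      show (0 : Fin 2).succ.succ.succ.succ.succ.succ.succ.succ.succ.succ = (10 : Fin 12) from rfl,
      show (0 : Fin 1).succ.succ.succ.succ.succ.succ.succ.succ.succ.succ.succ = (11 : Fin 12) from rfl] at h
    simp only [zsmul_eq_mul] at h
    simp only [map_add, map_mul, map_pow, map_one, map_intCast, ℓ_aa, ℓ_bb, ℓ_cc] at h
    linear_combination h
  -- the two coordinates of the equation over L
  set l0 : L := algebraMap ℚ L ((v 0 : ℤ) : ℚ) + algebraMap ℚ L ((v 1 : ℤ) : ℚ) * xx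
      + algebraMap ℚ L ((v 3 : ℤ) : ℚ) * xx^2
      + algebraMap ℚ L (((v 6 : ℤ) : ℚ) * (1/2)) * xx^3
      + algebraMap ℚ L (((v 7 : ℤ) : ℚ) * (1/2)) * xx^4
      + algebraMap ℚ L (((v 9 : ℤ) : ℚ) * (1/2)) * xx^5 with hl0def
  set l1 : L := algebraMap ℚ L ((v 2 : ℤ) : ℚ) + algebraMap ℚ L ((v 4 : ℤ) : ℚ) * xx
      + algebraMap ℚ L ((v 5 : ℤ) : ℚ) * xx^2
      + algebraMap ℚ L (((v 8 : ℤ) : ℚ) * (1/2)) * xx^3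
      + algebraMap ℚ L (((v 10 : ℤ) : ℚ) * (1/2)) * xx^4
      + algebraMap ℚ L (((v 11 : ℤ) : ℚ) * (1/2)) * xx^5 with hl1def
  have hcast : ∀ n : ℤ, AdjoinRoot.of qq (algebraMap ℚ L ((n : ℤ) : ℚ)) = ((n : ℤ) : K) := by
    intro n
    rw [show AdjoinRoot.of qq (algebraMap ℚ L ((n : ℤ) : ℚ))
        = ((AdjoinRoot.of qq).comp (algebraMap ℚ L)) ((n : ℤ) : ℚ) from rfl]
    exact map_intCast _ n
  have key : AdjoinRoot.mk qq (Polynomial.C l0 + Polynomial.C l1 * Polynomial.X) = 0 := by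
    rw [map_add, map_mul, AdjoinRoot.mk_C, AdjoinRoot.mk_C, AdjoinRoot.mk_X]
    rw [hl0def, hl1def]
    simp only [map_add, map_mul, map_pow, hcast,
      show AdjoinRoot.of qq (algebraMap ℚ L (1/2)) = hf from rfl,
      show AdjoinRoot.of qq xx = A from rfl,
      show AdjoinRoot.root qq = B from rfl]
    rw [show CC = hf * A ^ 3 from rfl] at hK0
    linear_combination hK0
  have hdvd : qq ∣ (Polynomial.C l0 + Polynomial.C l1 * Polynomial.X) :=
    AdjoinRoot.mk_eq_zero.1 key
  have hdeg : (Polynomial.C l0 + Polynomial.C l1 * Polynomial.X).degree ≤ 1 := by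
    apply le_trans (Polynomial.degree_add_le _ _)
    apply max_le (le_trans Polynomial.degree_C_le (by norm_num))
    apply le_trans (Polynomial.degree_mul_le _ _)
    calc (Polynomial.C l1).degree + Polynomial.degree Polynomial.X
        ≤ 0 + 1 := add_le_add Polynomial.degree_C_le Polynomial.degree_X_le
      _ ≤ 1 := by norm_num
  have hP0 : Polynomial.C l0 + Polynomial.C l1 * Polynomial.X = 0 := by
    by_contra hne
    exact qq_monic.not_dvd_of_degree_lt hne
      (lt_of_le_of_lt hdeg (by rw [qq_deg]; norm_num)) hdvd
  have hl0 : l0 = 0 := by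
    have h := congrArg (fun p => Polynomial.coeff p 0) hP0
    simpa using h
  have hl1 : l1 = 0 := by
    have h := congrArg (fun p => Polynomial.coeff p 1) hP0
    simpa using h
  -- now work in L = ℚ[x]/(x⁶)
  have lstep : ∀ c0 c1 c2 c3 c4 c5 : ℚ,
      algebraMap ℚ L c0 + algebraMap ℚ L c1 * xx + algebraMap ℚ L c2 * xx^2
        + algebraMap ℚ L c3 * xx^3 + algebraMap ℚ L c4 * xx^4
        + algebraMap ℚ L c5 * xx^5 = 0 →
      c0 = 0 ∧ c1 = 0 ∧ c2 = 0 ∧ c3 = 0 ∧ c4 = 0 ∧ c5 = 0 := by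
    intro c0 c1 c2 c3 c4 c5 hc
    have e0 : AdjoinRoot.mk ((Polynomial.X : Polynomial ℚ) ^ 6)
        (Polynomial.C c0 + Polynomial.C c1 * Polynomial.X + Polynomial.C c2 * Polynomial.X^2
          + Polynomial.C c3 * Polynomial.X^3 + Polynomial.C c4 * Polynomial.X^4
          + Polynomial.C c5 * Polynomial.X^5) = 0 := by
      simp only [map_add, map_mul, map_pow, AdjoinRoot.mk_C, AdjoinRoot.mk_X]
      rw [← AdjoinRoot.algebraMap_eq]
      exact hc
    have hdvd6 : (Polynomial.X : Polynomial ℚ) ^ 6 ∣ _ := AdjoinRoot.mk_eq_zero.1 e0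
    have hdeg6 : (Polynomial.C c0 + Polynomial.C c1 * Polynomial.X
        + Polynomial.C c2 * Polynomial.X^2 + Polynomial.C c3 * Polynomial.X^3
        + Polynomial.C c4 * Polynomial.X^4 + Polynomial.C c5 * Polynomial.X^5).degree ≤ 5 := by
      compute_degree
    have hzero : Polynomial.C c0 + Polynomial.C c1 * Polynomial.X
        + Polynomial.C c2 * Polynomial.X^2 + Polynomial.C c3 * Polynomial.X^3
        + Polynomial.C c4 * Polynomial.X^4 + Polynomial.C c5 * Polynomial.X^5 = 0 := by
      apply Polynomial.eq_zero_of_dvd_of_degree_lt hdvd6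
      apply lt_of_le_of_lt hdeg6
      rw [Polynomial.degree_X_pow]
      norm_num
    refine ⟨?_, ?_, ?_, ?_, ?_, ?_⟩
    · have h := congrArg (fun p => Polynomial.coeff p 0) hzero; simpa using h
    · have h := congrArg (fun p => Polynomial.coeff p 1) hzero; simpa using h
    · have h := congrArg (fun p => Polynomial.coeff p 2) hzero; simpa using h
    · have h := congrArg (fun p => Polynomial.coeff p 3) hzero; simpa using h
    · have h := congrArg (fun p => Polynomial.coeff p 4) hzero; simpa using h
    · have h := congrArg (fun p => Polynomial.coeff p 5) hzero; simpa using h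
  rw [hl0def] at hl0
  rw [hl1def] at hl1
  obtain ⟨e0, e1, e3, e6, e7, e9⟩ := lstep _ _ _ _ _ _ hl0
  obtain ⟨f2, f4, f5, f8, f10, f11⟩ := lstep _ _ _ _ _ _ hl1
  have g0 : v 0 = 0 := by exact_mod_cast e0
  have g1 : v 1 = 0 := by exact_mod_cast e1
  have g2 : v 2 = 0 := by exact_mod_cast f2
  have g3 : v 3 = 0 := by exact_mod_cast e3
  have g4 : v 4 = 0 := by exact_mod_cast f4
  have g5 : v 5 = 0 := by exact_mod_cast f5
  have g6 : v 6 = 0 := by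
    have : ((v 6 : ℤ) : ℚ) = 0 := by
      have h6 := e6
      field_simp at h6
      exact_mod_cast h6
    exact_mod_cast this
  have g7 : v 7 = 0 := by
    have : ((v 7 : ℤ) : ℚ) = 0 := by
      have h7 := e7
      field_simp at h7
      exact_mod_cast h7
    exact_mod_cast this
  have g8 : v 8 = 0 := by
    have : ((v 8 : ℤ) : ℚ) = 0 := by
      have h8 := f8
      field_simp at h8
      exact_mod_cast h8
    exact_mod_cast this
  have g9 : v 9 = 0 := by
    have : ((v 9 : ℤ) : ℚ) = 0 := by
      have h9 := e9
      field_simp at h9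
      exact_mod_cast h9
    exact_mod_cast this
  have g10 : v 10 = 0 := by
    have : ((v 10 : ℤ) : ℚ) = 0 := by
      have h10 := f10
      field_simp at h10
      exact_mod_cast h10
    exact_mod_cast this
  have g11 : v 11 = 0 := by
    have : ((v 11 : ℤ) : ℚ) = 0 := by
      have h11 := f11
      field_simp at h11
      exact_mod_cast h11
    exact_mod_cast this
  funext n
  rw [Pi.zero_apply]
  fin_cases n
  · exact g0
  · exact g1
  · exact g2
  · exact g3
  · exact g4
  · exact g5
  · exact g6
  · exact g7
  · exact g8
  · exact g9
  · exact g10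
  · exact g11

end RG2Aux

/-- R(G₂) is a free ℤ-module of rank 12 = |W(G₂)|. -/
theorem RG2_free_of_rank_twelve : Nonempty (RG2 ≃ₗ[ℤ] (Fin 12 → ℤ)) := by
  exact ⟨(LinearEquiv.ofBijective RG2Aux.φ ⟨RG2Aux.φ_inj, RG2Aux.φ_surj⟩).symm⟩
end

section
/- Let ℤ[ω₁,…,ω₄] be the polynomial ring over ℤ and let C = (c_{ij}) be the Cartan matrix of F₄, with rows (2,−1,0,0), (−1,2,−2,0), (0,−1,2,−1), (0,0,−1,2). For 1 ≤ i ≤ 4 let σ_i be the ℤ-algebra endomorphism of ℤ[ω₁,…,ω₄] determined by σ_i(ω_k) = ω_k for k ≠ i and σ_i(ω_i) = ω_i − Σ_{j=1}^{4} c_{ij}ω_j. Then each of σ₂, σ₃, σ₄ permutes the set {t₁,…,t₆}; in particular σ_i(c_r) = c_r for every i ∈ {2,3,4} and 1 ≤ r ≤ 6. -/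
open MvPolynomial

noncomputable section

/-- ℤ[ω₁,…,ω₄], with ωᵢ = X (i−1). -/
abbrev F4W : Type := MvPolynomial (Fin 4) ℤ

/-- The Cartan matrix of F₄. -/
def cartanF4 : Matrix (Fin 4) (Fin 4) ℤ :=
  !![2, -1, 0, 0;
     -1, 2, -2, 0;
     0, -1, 2, -1;
     0, 0, -1, 2]

/-- The simple reflection σᵢ as a ℤ-algebra endomorphism of ℤ[ω₁,…,ω₄]:
    σᵢ(ω_k) = ω_k for k ≠ i, σᵢ(ωᵢ) = ωᵢ − Σⱼ c_{ij} ωⱼ. -/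
def sigmaF4 (i : Fin 4) : F4W →ₐ[ℤ] F4W :=
  aeval fun k : Fin 4 =>
    if k = i then X i - ∑ j : Fin 4, C (cartanF4 i j) * X j else X k

/-- t₁=ω₄, t₂=ω₃−ω₄, t₃=ω₂−ω₃, t₄=ω₁−ω₂+ω₃, t₅=ω₁−ω₃+ω₄, t₆=ω₁−ω₄. -/
def tF4 : Fin 6 → F4W :=
  ![X 3, X 2 - X 3, X 1 - X 2, X 0 - X 1 + X 2, X 0 - X 2 + X 3, X 0 - X 3]

/-- c_r = e_r(t₁,…,t₆). -/
def cF4 (r : ℕ) : F4W :=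
  (Finset.powersetCard r (Finset.univ : Finset (Fin 6))).sum fun s => s.prod tF4


lemma cons_val_five {α : Type*} (a b c d e f : α) :
    (![a, b, c, d, e, f] : Fin 6 → α) 5 = f := rfl

def permOf (f : Fin 6 → Fin 6) (h1 : Function.LeftInverse f f)
    (h2 : Function.RightInverse f f) : Equiv.Perm (Fin 6) := ⟨f, f, h1, h2⟩

lemma keyF4 (i : Fin 4) (π : Equiv.Perm (Fin 6))
    (h : ∀ k, sigmaF4 i (tF4 k) = tF4 (π k)) :
    (⇑(sigmaF4 i) '' Set.range tF4 = Set.range tF4) ∧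
    (∀ r : ℕ, 1 ≤ r → r ≤ 6 → sigmaF4 i (cF4 r) = cF4 r) := by
  have hc : ⇑(sigmaF4 i) ∘ tF4 = tF4 ∘ π := funext h
  constructor
  · rw [← Set.range_comp, hc, Set.range_comp, π.surjective.range_eq, Set.image_univ]
  · intro r _ _
    unfold cF4
    rw [map_sum]
    have huniv : (Finset.univ : Finset (Fin 6)) = Finset.univ.map π.toEmbedding := by
      simp
    conv_rhs => rw [huniv, Finset.powersetCard_map, Finset.sum_map]
    refine Finset.sum_congr rfl fun s _ => ?_
    rw [map_prod,
      show ((Finset.mapEmbedding π.toEmbedding).toEmbedding s : Finset (Fin 6)) =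
          s.map π.toEmbedding from rfl,
      Finset.prod_map]
    exact Finset.prod_congr rfl fun k _ => h k

set_option maxHeartbeats 1000000 in

/-- Lemma 3 for G = F₄: each of σ₂, σ₃, σ₄ (i.e. σᵢ for i ≠ 1, zero-based i ≠ 0)
    permutes the set {t₁,…,t₆}; in particular σᵢ(c_r) = c_r for 1 ≤ r ≤ 6. -/
theorem sigmaF4_permutes_t_and_fixes_c :
    ∀ i : Fin 4, i ≠ 0 →
      (⇑(sigmaF4 i) '' Set.range tF4 = Set.range tF4) ∧
      (∀ r : ℕ, 1 ≤ r → r ≤ 6 → sigmaF4 i (cF4 r) = cF4 r) := by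
  intro i hi
  fin_cases i
  · exact absurd rfl hi
  · refine keyF4 1 (permOf ![0,1,3,2,4,5] (by decide) (by decide)) fun k => ?_
    fin_cases k <;>
      simp (config := { decide := true }) [sigmaF4, tF4, cartanF4, permOf,
        Fin.sum_univ_four, cons_val_five] <;> ring
  · refine keyF4 2 (permOf ![0,2,1,4,3,5] (by decide) (by decide)) fun k => ?_
    fin_cases k <;>
      simp (config := { decide := true }) [sigmaF4, tF4, cartanF4, permOf,
        Fin.sum_univ_four, cons_val_five] <;> ring
  · refine keyF4 3 (permOf ![1,0,2,3,5,4] (by decide) (by decide)) fun k => ?_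
    fin_cases k <;>
      simp (config := { decide := true }) [sigmaF4, tF4, cartanF4, permOf,
        Fin.sum_univ_four, cons_val_five] <;> ring
end
end

section
/- Let ℤ[ω₁,…,ω₇] be the polynomial ring over ℤ and let C = (c_{ij}) be the Cartan matrix of E₇: c_{ii} = 2, c_{ij} = −1 if {i,j} is one of the edges {1,3},{3,4},{4,5},{5,6},{6,7},{2,4} of the E₇ Dynkin diagram, and c_{ij} = 0 otherwise. For 1 ≤ i ≤ 7 let σ_i be the ℤ-algebra endomorphism of ℤ[ω₁,…,ω₇] determined by σ_i(ω_k) = ω_k for k ≠ i and σ_i(ω_i) = ω_i − Σ_{j=1}^{7} c_{ij}ω_j. Then each σ_i with i ≠ 2 permutes the set {t₁,…,t₇}; in particular σ_i(c_r) = c_r for every i ∈ {1,3,4,5,6,7} and 1 ≤ r ≤ 7. -/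
open MvPolynomial

noncomputable section

/-- ℤ[ω₁,…,ω₇], with ωᵢ = X (i−1). -/
abbrev E7W : Type := MvPolynomial (Fin 7) ℤ

/-- The Cartan matrix of E₇
    (edges {1,3},{3,4},{4,5},{5,6},{6,7},{2,4}, 1-based). -/
def cartanE7 : Matrix (Fin 7) (Fin 7) ℤ :=
  !![2, 0, -1, 0, 0, 0, 0;
     0, 2, 0, -1, 0, 0, 0;
     -1, 0, 2, -1, 0, 0, 0;
     0, -1, -1, 2, -1, 0, 0;
     0, 0, 0, -1, 2, -1, 0;
     0, 0, 0, 0, -1, 2, -1;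
     0, 0, 0, 0, 0, -1, 2]

/-- The simple reflection σᵢ as a ℤ-algebra endomorphism of ℤ[ω₁,…,ω₇]:
    σᵢ(ω_k) = ω_k for k ≠ i, σᵢ(ωᵢ) = ωᵢ − Σⱼ c_{ij} ωⱼ. -/
def sigmaE7 (i : Fin 7) : E7W →ₐ[ℤ] E7W :=
  aeval fun k : Fin 7 =>
    if k = i then X i - ∑ j : Fin 7, C (cartanE7 i j) * X j else X k

/-- t₁=ω₇, t₂=ω₆−ω₇, t₃=ω₅−ω₆, t₄=ω₄−ω₅, t₅=ω₃−ω₄+ω₂, t₆=ω₁−ω₃+ω₂, t₇=−ω₁+ω₂. -/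
def tE7 : Fin 7 → E7W :=
  ![X 6, X 5 - X 6, X 4 - X 5, X 3 - X 4, X 2 - X 3 + X 1, X 0 - X 2 + X 1,
    -X 0 + X 1]

/-- c_r = e_r(t₁,…,t₇). -/
def cE7 (r : ℕ) : E7W :=
  (Finset.powersetCard r (Finset.univ : Finset (Fin 7))).sum fun s => s.prod tE7

def permE7 : Fin 7 → Equiv.Perm (Fin 7) :=
  ![Equiv.swap 5 6, 1, Equiv.swap 4 5, Equiv.swap 3 4, Equiv.swap 2 3,
    Equiv.swap 1 2, Equiv.swap 0 1]
lemma sigX_ne (i k : Fin 7) (h : k ≠ i) : sigmaE7 i (X k) = X k := by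
  simp [sigmaE7, h]
lemma sigX0 : sigmaE7 0 (X 0) = -X 0 + X 2 := by
  simp only [sigmaE7, aeval_X, if_pos rfl, Fin.sum_univ_seven]
  norm_num [show cartanE7 0 0 = 2 from rfl, show cartanE7 0 1 = 0 from rfl, show cartanE7 0 2 = -1 from rfl, show cartanE7 0 3 = 0 from rfl, show cartanE7 0 4 = 0 from rfl, show cartanE7 0 5 = 0 from rfl, show cartanE7 0 6 = 0 from rfl]
  ring
lemma sigX2 : sigmaE7 2 (X 2) = -X 2 + X 0 + X 3 := by
  simp only [sigmaE7, aeval_X, if_pos rfl, Fin.sum_univ_seven]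
  norm_num [show cartanE7 2 0 = -1 from rfl, show cartanE7 2 1 = 0 from rfl, show cartanE7 2 2 = 2 from rfl, show cartanE7 2 3 = -1 from rfl, show cartanE7 2 4 = 0 from rfl, show cartanE7 2 5 = 0 from rfl, show cartanE7 2 6 = 0 from rfl]
  ring
lemma sigX3 : sigmaE7 3 (X 3) = -X 3 + X 1 + X 2 + X 4 := by
  simp only [sigmaE7, aeval_X, if_pos rfl, Fin.sum_univ_seven]
  norm_num [show cartanE7 3 0 = 0 from rfl, show cartanE7 3 1 = -1 from rfl, show cartanE7 3 2 = -1 from rfl, show cartanE7 3 3 = 2 from rfl, show cartanE7 3 4 = -1 from rfl, show cartanE7 3 5 = 0 from rfl, show cartanE7 3 6 = 0 from rfl]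
  ring
lemma sigX4 : sigmaE7 4 (X 4) = -X 4 + X 3 + X 5 := by
  simp only [sigmaE7, aeval_X, if_pos rfl, Fin.sum_univ_seven]
  norm_num [show cartanE7 4 0 = 0 from rfl, show cartanE7 4 1 = 0 from rfl, show cartanE7 4 2 = 0 from rfl, show cartanE7 4 3 = -1 from rfl, show cartanE7 4 4 = 2 from rfl, show cartanE7 4 5 = -1 from rfl, show cartanE7 4 6 = 0 from rfl]
  ring
lemma sigX5 : sigmaE7 5 (X 5) = -X 5 + X 4 + X 6 := by
  simp only [sigmaE7, aeval_X, if_pos rfl, Fin.sum_univ_seven]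
  norm_num [show cartanE7 5 0 = 0 from rfl, show cartanE7 5 1 = 0 from rfl, show cartanE7 5 2 = 0 from rfl, show cartanE7 5 3 = 0 from rfl, show cartanE7 5 4 = -1 from rfl, show cartanE7 5 5 = 2 from rfl, show cartanE7 5 6 = -1 from rfl]
  ring
lemma sigX6 : sigmaE7 6 (X 6) = -X 6 + X 5 := by
  simp only [sigmaE7, aeval_X, if_pos rfl, Fin.sum_univ_seven]
  norm_num [show cartanE7 6 0 = 0 from rfl, show cartanE7 6 1 = 0 from rfl, show cartanE7 6 2 = 0 from rfl, show cartanE7 6 3 = 0 from rfl, show cartanE7 6 4 = 0 from rfl, show cartanE7 6 5 = -1 from rfl, show cartanE7 6 6 = 2 from rfl]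
  ring
lemma key0 : ∀ k : Fin 7, sigmaE7 0 (tE7 k) = tE7 (permE7 0 k) := by
  intro k; fin_cases k
  · show sigmaE7 0 (X 6) = (X 6)
    rw [sigX_ne 0 6 (by decide)]
    try ring
  · show sigmaE7 0 (X 5 - X 6) = (X 5 - X 6)
    rw [map_sub, sigX_ne 0 5 (by decide), sigX_ne 0 6 (by decide)]
    try ring
  · show sigmaE7 0 (X 4 - X 5) = (X 4 - X 5)
    rw [map_sub, sigX_ne 0 4 (by decide), sigX_ne 0 5 (by decide)]
    try ring
  · show sigmaE7 0 (X 3 - X 4) = (X 3 - X 4)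
    rw [map_sub, sigX_ne 0 3 (by decide), sigX_ne 0 4 (by decide)]
    try ring
  · show sigmaE7 0 (X 2 - X 3 + X 1) = (X 2 - X 3 + X 1)
    rw [map_add, map_sub, sigX_ne 0 2 (by decide), sigX_ne 0 3 (by decide), sigX_ne 0 1 (by decide)]
    try ring
  · show sigmaE7 0 (X 0 - X 2 + X 1) = (-X 0 + X 1)
    rw [map_add, map_sub, sigX0, sigX_ne 0 2 (by decide), sigX_ne 0 1 (by decide)]
    try ring
  · show sigmaE7 0 (-X 0 + X 1) = (X 0 - X 2 + X 1)
    rw [map_add, map_neg, sigX0, sigX_ne 0 1 (by decide)]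
    try ring
lemma key2 : ∀ k : Fin 7, sigmaE7 2 (tE7 k) = tE7 (permE7 2 k) := by
  intro k; fin_cases k
  · show sigmaE7 2 (X 6) = (X 6)
    rw [sigX_ne 2 6 (by decide)]
    try ring
  · show sigmaE7 2 (X 5 - X 6) = (X 5 - X 6)
    rw [map_sub, sigX_ne 2 5 (by decide), sigX_ne 2 6 (by decide)]
    try ring
  · show sigmaE7 2 (X 4 - X 5) = (X 4 - X 5)
    rw [map_sub, sigX_ne 2 4 (by decide), sigX_ne 2 5 (by decide)]
    try ring
  · show sigmaE7 2 (X 3 - X 4) = (X 3 - X 4)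
    rw [map_sub, sigX_ne 2 3 (by decide), sigX_ne 2 4 (by decide)]
    try ring
  · show sigmaE7 2 (X 2 - X 3 + X 1) = (X 0 - X 2 + X 1)
    rw [map_add, map_sub, sigX2, sigX_ne 2 3 (by decide), sigX_ne 2 1 (by decide)]
    try ring
  · show sigmaE7 2 (X 0 - X 2 + X 1) = (X 2 - X 3 + X 1)
    rw [map_add, map_sub, sigX_ne 2 0 (by decide), sigX2, sigX_ne 2 1 (by decide)]
    try ring
  · show sigmaE7 2 (-X 0 + X 1) = (-X 0 + X 1)
    rw [map_add, map_neg, sigX_ne 2 0 (by decide), sigX_ne 2 1 (by decide)]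
    try ring
lemma key3 : ∀ k : Fin 7, sigmaE7 3 (tE7 k) = tE7 (permE7 3 k) := by
  intro k; fin_cases k
  · show sigmaE7 3 (X 6) = (X 6)
    rw [sigX_ne 3 6 (by decide)]
    try ring
  · show sigmaE7 3 (X 5 - X 6) = (X 5 - X 6)
    rw [map_sub, sigX_ne 3 5 (by decide), sigX_ne 3 6 (by decide)]
    try ring
  · show sigmaE7 3 (X 4 - X 5) = (X 4 - X 5)
    rw [map_sub, sigX_ne 3 4 (by decide), sigX_ne 3 5 (by decide)]
    try ring
  · show sigmaE7 3 (X 3 - X 4) = (X 2 - X 3 + X 1)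
    rw [map_sub, sigX3, sigX_ne 3 4 (by decide)]
    try ring
  · show sigmaE7 3 (X 2 - X 3 + X 1) = (X 3 - X 4)
    rw [map_add, map_sub, sigX_ne 3 2 (by decide), sigX3, sigX_ne 3 1 (by decide)]
    try ring
  · show sigmaE7 3 (X 0 - X 2 + X 1) = (X 0 - X 2 + X 1)
    rw [map_add, map_sub, sigX_ne 3 0 (by decide), sigX_ne 3 2 (by decide), sigX_ne 3 1 (by decide)]
    try ring
  · show sigmaE7 3 (-X 0 + X 1) = (-X 0 + X 1)
    rw [map_add, map_neg, sigX_ne 3 0 (by decide), sigX_ne 3 1 (by decide)]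
    try ring
lemma key4 : ∀ k : Fin 7, sigmaE7 4 (tE7 k) = tE7 (permE7 4 k) := by
  intro k; fin_cases k
  · show sigmaE7 4 (X 6) = (X 6)
    rw [sigX_ne 4 6 (by decide)]
    try ring
  · show sigmaE7 4 (X 5 - X 6) = (X 5 - X 6)
    rw [map_sub, sigX_ne 4 5 (by decide), sigX_ne 4 6 (by decide)]
    try ring
  · show sigmaE7 4 (X 4 - X 5) = (X 3 - X 4)
    rw [map_sub, sigX4, sigX_ne 4 5 (by decide)]
    try ring
  · show sigmaE7 4 (X 3 - X 4) = (X 4 - X 5)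
    rw [map_sub, sigX_ne 4 3 (by decide), sigX4]
    try ring
  · show sigmaE7 4 (X 2 - X 3 + X 1) = (X 2 - X 3 + X 1)
    rw [map_add, map_sub, sigX_ne 4 2 (by decide), sigX_ne 4 3 (by decide), sigX_ne 4 1 (by decide)]
    try ring
  · show sigmaE7 4 (X 0 - X 2 + X 1) = (X 0 - X 2 + X 1)
    rw [map_add, map_sub, sigX_ne 4 0 (by decide), sigX_ne 4 2 (by decide), sigX_ne 4 1 (by decide)]
    try ring
  · show sigmaE7 4 (-X 0 + X 1) = (-X 0 + X 1)
    rw [map_add, map_neg, sigX_ne 4 0 (by decide), sigX_ne 4 1 (by decide)]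
    try ring
lemma key5 : ∀ k : Fin 7, sigmaE7 5 (tE7 k) = tE7 (permE7 5 k) := by
  intro k; fin_cases k
  · show sigmaE7 5 (X 6) = (X 6)
    rw [sigX_ne 5 6 (by decide)]
    try ring
  · show sigmaE7 5 (X 5 - X 6) = (X 4 - X 5)
    rw [map_sub, sigX5, sigX_ne 5 6 (by decide)]
    try ring
  · show sigmaE7 5 (X 4 - X 5) = (X 5 - X 6)
    rw [map_sub, sigX_ne 5 4 (by decide), sigX5]
    try ring
  · show sigmaE7 5 (X 3 - X 4) = (X 3 - X 4)
    rw [map_sub, sigX_ne 5 3 (by decide), sigX_ne 5 4 (by decide)]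
    try ring
  · show sigmaE7 5 (X 2 - X 3 + X 1) = (X 2 - X 3 + X 1)
    rw [map_add, map_sub, sigX_ne 5 2 (by decide), sigX_ne 5 3 (by decide), sigX_ne 5 1 (by decide)]
    try ring
  · show sigmaE7 5 (X 0 - X 2 + X 1) = (X 0 - X 2 + X 1)
    rw [map_add, map_sub, sigX_ne 5 0 (by decide), sigX_ne 5 2 (by decide), sigX_ne 5 1 (by decide)]
    try ring
  · show sigmaE7 5 (-X 0 + X 1) = (-X 0 + X 1)
    rw [map_add, map_neg, sigX_ne 5 0 (by decide), sigX_ne 5 1 (by decide)]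
    try ring
lemma key6 : ∀ k : Fin 7, sigmaE7 6 (tE7 k) = tE7 (permE7 6 k) := by
  intro k; fin_cases k
  · show sigmaE7 6 (X 6) = (X 5 - X 6)
    rw [sigX6]
    try ring
  · show sigmaE7 6 (X 5 - X 6) = (X 6)
    rw [map_sub, sigX_ne 6 5 (by decide), sigX6]
    try ring
  · show sigmaE7 6 (X 4 - X 5) = (X 4 - X 5)
    rw [map_sub, sigX_ne 6 4 (by decide), sigX_ne 6 5 (by decide)]
    try ring
  · show sigmaE7 6 (X 3 - X 4) = (X 3 - X 4)
    rw [map_sub, sigX_ne 6 3 (by decide), sigX_ne 6 4 (by decide)]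
    try ring
  · show sigmaE7 6 (X 2 - X 3 + X 1) = (X 2 - X 3 + X 1)
    rw [map_add, map_sub, sigX_ne 6 2 (by decide), sigX_ne 6 3 (by decide), sigX_ne 6 1 (by decide)]
    try ring
  · show sigmaE7 6 (X 0 - X 2 + X 1) = (X 0 - X 2 + X 1)
    rw [map_add, map_sub, sigX_ne 6 0 (by decide), sigX_ne 6 2 (by decide), sigX_ne 6 1 (by decide)]
    try ring
  · show sigmaE7 6 (-X 0 + X 1) = (-X 0 + X 1)
    rw [map_add, map_neg, sigX_ne 6 0 (by decide), sigX_ne 6 1 (by decide)]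
    try ring

lemma perm_sum (π : Equiv.Perm (Fin 7)) (r : ℕ) :
    (∑ s ∈ Finset.powersetCard r (Finset.univ : Finset (Fin 7)),
      ∏ k ∈ s, tE7 (π k)) = cE7 r := by
  unfold cE7
  refine Finset.sum_nbij' (fun s => s.image π) (fun s => s.image π.symm)
    ?_ ?_ ?_ ?_ ?_
  · intro s hs
    simp only [Finset.mem_powersetCard] at hs ⊢
    exact ⟨Finset.subset_univ _, by rw [Finset.card_image_of_injective _ π.injective, hs.2]⟩
  · intro s hs
    simp only [Finset.mem_powersetCard] at hs ⊢
    exact ⟨Finset.subset_univ _, by rw [Finset.card_image_of_injective _ π.symm.injective, hs.2]⟩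
  · intro s _
    simp [Finset.image_image]
  · intro s _
    simp [Finset.image_image]
  · intro s _
    rw [Finset.prod_image (fun a _ b _ h => π.injective h)]

lemma sigma_key : ∀ i : Fin 7, i ≠ 1 → ∀ k : Fin 7,
    sigmaE7 i (tE7 k) = tE7 (permE7 i k) := by
  intro i hi
  fin_cases i
  · exact key0
  · exact absurd rfl hi
  · exact key2
  · exact key3
  · exact key4
  · exact key5
  · exact key6


/-- Lemma 3 for G = E₇: each σᵢ with i ≠ 2 (zero-based i ≠ 1) permutes the set
    {t₁,…,t₇}; in particular σᵢ(c_r) = c_r for 1 ≤ r ≤ 7. -/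
theorem sigmaE7_permutes_t_and_fixes_c :
    ∀ i : Fin 7, i ≠ 1 →
      (⇑(sigmaE7 i) '' Set.range tE7 = Set.range tE7) ∧
      (∀ r : ℕ, 1 ≤ r → r ≤ 7 → sigmaE7 i (cE7 r) = cE7 r) := by

  intro i hi
  have h := sigma_key i hi
  have hc : ⇑(sigmaE7 i) ∘ tE7 = tE7 ∘ ⇑(permE7 i) := funext h
  constructor
  · rw [← Set.range_comp, hc, Set.range_comp, Equiv.range_eq_univ, Set.image_univ]
  · intro r _ _
    have : sigmaE7 i (cE7 r) =
        ∑ s ∈ Finset.powersetCard r (Finset.univ : Finset (Fin 7)),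
          ∏ k ∈ s, sigmaE7 i (tE7 k) := by
      unfold cE7
      rw [map_sum]
      exact Finset.sum_congr rfl fun s _ => map_prod _ _ _
    rw [this]
    simp_rw [h]
    exact perm_sum (permE7 i) r
end
end
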